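/- arXiv:math/0311312 — 4 statements merged into one kernel-verified Lean document; each statement's English description precedes it below -/
import Mathlib

section
/- Let d = 2h with h > 2 and let 1 < j < h. Then (u+v) divides ∏_{l=h−j+1}^{h} (l·v + (d−l)·u), (u+v) does not divide ∏_{l=0}^{j−1} (l·v + (d−l)·u), and consequently (u+v) does not divide D_j, where D_j ∈ R is the unique polynomial with (u−v)·D_j = ∏_{l=h−j+1}^{h} (l·v + (d−l)·u) − ∏_{l=0}^{j−1} (l·v + (d−l)·u). -/
noncomputable section

abbrev R2 : Type := MvPolynomial (Fin 2) ℚ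

def uu : R2 := MvPolynomial.X 0
def vv : R2 := MvPolynomial.X 1

/-- The involution of `R2 = ℚ[u,v]` swapping `u` and `v`; `P*`. -/
def swapUV (P : R2) : R2 := MvPolynomial.rename (Equiv.swap (0 : Fin 2) 1) P

/-- `Q_k(y) = ∏_{j=0}^{k} (y + j·u + (k−j)·v)` in `R2[y]`. -/
def Qp (k : ℕ) : Polynomial R2 :=
  ∏ j ∈ Finset.range (k + 1),
    (Polynomial.X + Polynomial.C ((j : R2) * uu + ((k - j : ℕ) : R2) * vv))

/-- `C_{d+1} = ∏_{j=0}^{d} (j·u + (d−j)·v)` in `R2`. -/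
def Cdtop (d : ℕ) : R2 :=
  ∏ j ∈ Finset.range (d + 1), ((j : R2) * uu + ((d - j : ℕ) : R2) * vv)

/-- `Q_k(x_i)` as an element of `R2[x_1,…,x_r]`. -/
def Qm (r k : ℕ) (i : Fin r) : MvPolynomial (Fin r) R2 :=
  ∏ j ∈ Finset.range (k + 1),
    (MvPolynomial.X i + MvPolynomial.C ((j : R2) * uu + ((k - j : ℕ) : R2) * vv))

/-- Evaluation at `u ↦ 1, v ↦ -1`. -/
def ev1 : R2 →+* ℚ := MvPolynomial.eval (fun i : Fin 2 => if i = 0 then 1 else -1)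

lemma ev1_uu : ev1 uu = 1 := by simp [ev1, uu]
lemma ev1_vv : ev1 vv = -1 := by simp [ev1, vv]

/-- End of the proof of Proposition 4.5: `(u+v)` divides `∏_{l=h−j+1}^{h}(lv+(d−l)u)`,
does not divide `∏_{l=0}^{j−1}(lv+(d−l)u)`, and hence does not divide `D_j`. -/
theorem stmt16 (h j : ℕ) (hh : 2 < h) (hj1 : 1 < j) (hj2 : j < h) (d : ℕ) (hd : d = 2 * h)
    (Dj : R2)
    (hDj : (uu - vv) * Dj =
        (∏ l ∈ Finset.Icc (h - j + 1) h, ((l : R2) * vv + ((d - l : ℕ) : R2) * uu)) -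
          ∏ l ∈ Finset.range j, ((l : R2) * vv + ((d - l : ℕ) : R2) * uu)) :
    ((uu + vv) ∣ ∏ l ∈ Finset.Icc (h - j + 1) h, ((l : R2) * vv + ((d - l : ℕ) : R2) * uu)) ∧
    (¬ (uu + vv) ∣ ∏ l ∈ Finset.range j, ((l : R2) * vv + ((d - l : ℕ) : R2) * uu)) ∧
    (¬ (uu + vv) ∣ Dj) := by
  have hdiv : (uu + vv) ∣ ∏ l ∈ Finset.Icc (h - j + 1) h,
      ((l : R2) * vv + ((d - l : ℕ) : R2) * uu) := by
    have hmem : h ∈ Finset.Icc (h - j + 1) h := by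
      simp only [Finset.mem_Icc]
      omega
    refine dvd_trans ?_ (Finset.dvd_prod_of_mem _ hmem)
    have hdh : d - h = h := by omega
    rw [hdh]
    exact ⟨(h : R2), by ring⟩
  have hndvd : ¬ (uu + vv) ∣ ∏ l ∈ Finset.range j,
      ((l : R2) * vv + ((d - l : ℕ) : R2) * uu) := by
    intro ⟨c, hc⟩
    have := congrArg ev1 hc
    rw [map_mul, map_add, ev1_uu, ev1_vv, map_prod] at this
    simp only [add_neg_cancel, zero_mul] at this
    have hne : ∀ l ∈ Finset.range j, ev1 ((l : R2) * vv + ((d - l : ℕ) : R2) * uu) ≠ 0 := by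
      intro l hl
      rw [map_add, map_mul, map_mul, ev1_uu, ev1_vv, map_natCast, map_natCast]
      push_cast
      have hld : l ≤ d := by
        simp only [Finset.mem_range] at hl; omega
      have h2 : ((d - l : ℕ) : ℚ) = (d : ℚ) - l := by
        push_cast [hld]; ring
      rw [h2]
      have : (l : ℚ) * -1 + ((d : ℚ) - l) * 1 = (d : ℚ) - 2 * l := by ring
      rw [this]
      have hlt : 2 * l < d := by
        simp only [Finset.mem_range] at hl; omega
      have : (2 * l : ℚ) < (d : ℚ) := by exact_mod_cast hlt
      push_cast at this ⊢
      linarith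
    exact Finset.prod_ne_zero_iff.mpr hne this
  refine ⟨hdiv, hndvd, fun hDdvd => hndvd ?_⟩
  have : (∏ l ∈ Finset.range j, ((l : R2) * vv + ((d - l : ℕ) : R2) * uu)) =
      (∏ l ∈ Finset.Icc (h - j + 1) h, ((l : R2) * vv + ((d - l : ℕ) : R2) * uu))
        - (uu - vv) * Dj := by
    rw [hDj]; ring
  rw [this]
  exact dvd_sub hdiv (Dvd.dvd.mul_left hDdvd _)
end
end

section
/- Let d = 2h with h ≥ 1, and set Π := ∏_{l=0}^{h−1} (l·v + (d−l)·u) and L := (h+1)·v + (h−1)·u in R. Then the ideal of R generated by (u+v)·∂Π and (u+v)·∂(Π·L) equals the ideal of R generated by (u+v)·∂Π and (u+v)·Π. -/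
noncomputable section

/-- Proposition 4.5, identity (2): for `d = 2h`, `Π = ∏_{l=0}^{h−1}(lv+(d−l)u)`,
`L = (h+1)v + (h−1)u`, one has `((u+v)·∂Π, (u+v)·∂(ΠL)) = ((u+v)·∂Π, (u+v)·Π)`. -/
theorem stmt17 (h : ℕ) (hh : 1 ≤ h) (d : ℕ) (hd : d = 2 * h)
    (DPi DPiL : R2)
    (hDPi : (uu - vv) * DPi =
        (∏ l ∈ Finset.range h, ((l : R2) * vv + ((d - l : ℕ) : R2) * uu)) -
          swapUV (∏ l ∈ Finset.range h, ((l : R2) * vv + ((d - l : ℕ) : R2) * uu)))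
    (hDPiL : (uu - vv) * DPiL =
        (∏ l ∈ Finset.range h, ((l : R2) * vv + ((d - l : ℕ) : R2) * uu)) *
            (((h : R2) + 1) * vv + ((h : R2) - 1) * uu) -
          swapUV ((∏ l ∈ Finset.range h, ((l : R2) * vv + ((d - l : ℕ) : R2) * uu)) *
            (((h : R2) + 1) * vv + ((h : R2) - 1) * uu))) :
    Ideal.span ({(uu + vv) * DPi, (uu + vv) * DPiL} : Set R2) =
      Ideal.span ({(uu + vv) * DPi,
        (uu + vv) * ∏ l ∈ Finset.range h, ((l : R2) * vv + ((d - l : ℕ) : R2) * uu)} : Set R2) := by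

  set P : R2 := ∏ l ∈ Finset.range h, ((l : R2) * vv + ((d - l : ℕ) : R2) * uu) with hP
  have hne : (uu - vv : R2) ≠ 0 := by
    intro h0
    have h1 := congrArg (MvPolynomial.eval (fun i : Fin 2 => if i = 0 then (1:ℚ) else 0)) h0
    simp [uu, vv] at h1
  have hmul : ∀ a b : R2, swapUV (a * b) = swapUV a * swapUV b := fun a b => by
    simp [swapUV]
  have hSP : swapUV P = P - (uu - vv) * DPi := by linear_combination hDPi
  have hswapL : swapUV (((h : R2) + 1) * vv + ((h : R2) - 1) * uu)
      = ((h : R2) + 1) * uu + ((h : R2) - 1) * vv := by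
    simp [swapUV, uu, vv]
  have key : DPiL = DPi * (((h : R2) + 1) * uu + ((h : R2) - 1) * vv) - 2 * P := by
    apply mul_left_cancel₀ hne
    rw [hDPiL, hmul, hSP, hswapL]
    ring
  have memB : (uu + vv) * DPiL ∈ Ideal.span ({(uu + vv) * DPi, (uu + vv) * P} : Set R2) := by
    have hA : (uu + vv) * DPi ∈ Ideal.span ({(uu + vv) * DPi, (uu + vv) * P} : Set R2) :=
      Ideal.subset_span (by simp)
    have hC : (uu + vv) * P ∈ Ideal.span ({(uu + vv) * DPi, (uu + vv) * P} : Set R2) :=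
      Ideal.subset_span (by simp)
    have : (uu + vv) * DPiL =
        ((uu + vv) * DPi) * (((h : R2) + 1) * uu + ((h : R2) - 1) * vv)
          - 2 * ((uu + vv) * P) := by rw [key]; ring
    rw [this]
    exact sub_mem (Ideal.mul_mem_right _ _ hA) (Ideal.mul_mem_left _ _ hC)
  have memC : (uu + vv) * P ∈ Ideal.span ({(uu + vv) * DPi, (uu + vv) * DPiL} : Set R2) := by
    have hA : (uu + vv) * DPi ∈ Ideal.span ({(uu + vv) * DPi, (uu + vv) * DPiL} : Set R2) :=
      Ideal.subset_span (by simp)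
    have hB : (uu + vv) * DPiL ∈ Ideal.span ({(uu + vv) * DPi, (uu + vv) * DPiL} : Set R2) :=
      Ideal.subset_span (by simp)
    have h2 : (2 : ℚ) • ((uu + vv) * P) =
        ((uu + vv) * DPi) * (((h : R2) + 1) * uu + ((h : R2) - 1) * vv)
          - (uu + vv) * DPiL := by
      rw [MvPolynomial.smul_eq_C_mul, map_ofNat, key]; ring
    have h2mem : (2 : ℚ) • ((uu + vv) * P) ∈
        Ideal.span ({(uu + vv) * DPi, (uu + vv) * DPiL} : Set R2) := by
      rw [h2]
      exact sub_mem (Ideal.mul_mem_right _ _ hA) hB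
    have := Submodule.smul_of_tower_mem _ ((2 : ℚ)⁻¹) h2mem
    rwa [smul_smul, inv_mul_cancel₀ (by norm_num : (2:ℚ) ≠ 0), one_smul] at this
  apply le_antisymm
  · rw [Ideal.span_le]
    rintro x hx
    simp only [Set.mem_insert_iff, Set.mem_singleton_iff] at hx
    rcases hx with rfl | rfl
    · exact Ideal.subset_span (by simp)
    · exact memB
  · rw [Ideal.span_le]
    rintro x hx
    simp only [Set.mem_insert_iff, Set.mem_singleton_iff] at hx
    rcases hx with rfl | rfl
    · exact Ideal.subset_span (by simp)
    · exact memC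
end
end

section
/- Let d = 2h with h > 2, and set Π := ∏_{l=0}^{h−1} (l·v + (d−l)·u) in R. Then the ideal of R generated by ∂Π and ∂((u+3v)·Π) equals the ideal of R generated by ∂Π and Π. -/
noncomputable section

/-- Discussion 4.6 / Theorem 4.7: for `d = 2h`, `h > 2`, `Π = ∏_{l=0}^{h−1}(lv+(d−l)u)`,
the ideal `(∂Π, ∂((u+3v)Π))` equals the ideal `(∂Π, Π)`. -/
theorem stmt18 (h : ℕ) (hh : 2 < h) (d : ℕ) (hd : d = 2 * h)
    (DPi DPi' : R2)
    (hDPi : (uu - vv) * DPi =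
        (∏ l ∈ Finset.range h, ((l : R2) * vv + ((d - l : ℕ) : R2) * uu)) -
          swapUV (∏ l ∈ Finset.range h, ((l : R2) * vv + ((d - l : ℕ) : R2) * uu)))
    (hDPi' : (uu - vv) * DPi' =
        (uu + 3 * vv) * (∏ l ∈ Finset.range h, ((l : R2) * vv + ((d - l : ℕ) : R2) * uu)) -
          swapUV ((uu + 3 * vv) *
            ∏ l ∈ Finset.range h, ((l : R2) * vv + ((d - l : ℕ) : R2) * uu))) :
    Ideal.span ({DPi, DPi'} : Set R2) =
      Ideal.span ({DPi,
        ∏ l ∈ Finset.range h, ((l : R2) * vv + ((d - l : ℕ) : R2) * uu)} : Set R2) := by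
  set Pi : R2 := ∏ l ∈ Finset.range h, ((l : R2) * vv + ((d - l : ℕ) : R2) * uu) with hPi
  have hne : (uu - vv : R2) ≠ 0 := by
    simp only [uu, vv, sub_ne_zero]
    exact fun hXY => absurd (MvPolynomial.X_injective hXY) (by decide)
  have hswapmul : swapUV ((uu + 3 * vv) * Pi) = (vv + 3 * uu) * swapUV Pi := by
    simp only [swapUV, map_mul, map_add, map_ofNat, MvPolynomial.rename_X, uu, vv]
    simp
  have hswapPi : swapUV Pi = Pi - (uu - vv) * DPi := by
    rw [hDPi]; ring
  have key : DPi' = (vv + 3 * uu) * DPi - 2 * Pi := by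
    apply mul_left_cancel₀ hne
    rw [hDPi', hswapmul, hswapPi]; ring
  apply le_antisymm <;> rw [Ideal.span_le] <;> intro x hx <;>
    simp only [Set.mem_insert_iff, Set.mem_singleton_iff] at hx <;>
    rcases hx with rfl | rfl
  · exact Ideal.subset_span (by simp)
  · rw [SetLike.mem_coe, key, Ideal.mem_span_pair]
    exact ⟨vv + 3 * uu, -2, by ring⟩
  · exact Ideal.subset_span (by simp)
  · have h2 : ((2:R2)) * Pi ∈ Ideal.span ({DPi, DPi'} : Set R2) :=
      Ideal.mem_span_pair.mpr ⟨vv + 3 * uu, -1, by rw [key]; ring⟩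
    have hc : (MvPolynomial.C (1/2 : ℚ) : R2) * 2 = 1 := by
      rw [show ((2:R2)) = MvPolynomial.C (2:ℚ) from (map_ofNat MvPolynomial.C 2).symm, ← map_mul]
      norm_num
    have h3 : Pi = MvPolynomial.C (1/2 : ℚ) * ((2:R2) * Pi) := by
      rw [← mul_assoc, hc, one_mul]
    rw [SetLike.mem_coe, h3]
    exact Ideal.mul_mem_left _ _ h2
end
end

section
/- Let d = 2h+1 with h ≥ 1, and for j ≥ 0 set Π_j := ∏_{l=0}^{j−1} (l·v + (d−l)·u) ∈ R. Then for every integer j ≥ h+1, the polynomial ∂Π_j belongs to the ideal of R generated by ∂Π_{h+1} and ∂Π_{h+2}. -/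
noncomputable section

lemma swapUV_mul (a b : R2) : swapUV (a * b) = swapUV a * swapUV b := by
  simp [swapUV, map_mul]

lemma swapUV_uu : swapUV uu = vv := by
  simp [swapUV, uu, vv, MvPolynomial.rename_X]

lemma swapUV_vv : swapUV vv = uu := by
  simp [swapUV, uu, vv, MvPolynomial.rename_X]

lemma uu_sub_vv_ne : (uu - vv : R2) ≠ 0 := by
  rw [sub_ne_zero]
  intro hEq
  have := MvPolynomial.X_injective (R := ℚ) hEq
  exact absurd this (by decide)

/-- Final Remark of the paper: for `d = 2h+1` and `Π_j = ∏_{l=0}^{j−1}(lv+(d−l)u)`,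
every `∂Π_j` with `j ≥ h+1` lies in the ideal generated by `∂Π_{h+1}` and `∂Π_{h+2}`. -/
theorem stmt19 (h : ℕ) (hh : 1 ≤ h) (d : ℕ) (hd : d = 2 * h + 1)
    (D : ℕ → R2)
    (hD : ∀ j : ℕ, (uu - vv) * D j =
        (∏ l ∈ Finset.range j, ((l : R2) * vv + ((d - l : ℕ) : R2) * uu)) -
          swapUV (∏ l ∈ Finset.range j, ((l : R2) * vv + ((d - l : ℕ) : R2) * uu))) :
    ∀ j : ℕ, h + 1 ≤ j → D j ∈ Ideal.span ({D (h + 1), D (h + 2)} : Set R2) := by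
  set I : Ideal R2 := Ideal.span ({D (h + 1), D (h + 2)} : Set R2) with hI
  set Pi : ℕ → R2 := fun j => ∏ l ∈ Finset.range j, ((l : R2) * vv + ((d - l : ℕ) : R2) * uu)
    with hPi
  set f : ℕ → R2 := fun l => (l : R2) * vv + ((d - l : ℕ) : R2) * uu with hf
  -- swap of a single factor
  have hswf : ∀ l : ℕ, swapUV (f l) = (l : R2) * uu + ((d - l : ℕ) : R2) * vv := by
    intro l
    simp [swapUV, hf, map_add, map_mul, MvPolynomial.rename_X, uu, vv]
  -- the recursion for D
  have hrec : ∀ l : ℕ,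
      D (l + 1) = f l * D l + (((d - l : ℕ) : R2) - (l : R2)) * swapUV (Pi l) := by
    intro l
    apply mul_left_cancel₀ uu_sub_vv_ne
    rw [hD (l + 1)]
    have h1 : Pi (l + 1) = Pi l * f l := by
      simp [hPi, hf, Finset.prod_range_succ]
    have h3 : (uu - vv) * D l = Pi l - swapUV (Pi l) := hD l
    calc Pi (l + 1) - swapUV (Pi (l + 1))
        = Pi l * f l - swapUV (Pi l) * ((l : R2) * uu + ((d - l : ℕ) : R2) * vv) := by
          rw [h1, swapUV_mul, hswf]
      _ = f l * ((uu - vv) * D l)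
            + (uu - vv) * ((((d - l : ℕ) : R2) - (l : R2)) * swapUV (Pi l)) := by
          rw [h3]; ring
      _ = (uu - vv) * (f l * D l + (((d - l : ℕ) : R2) - (l : R2)) * swapUV (Pi l)) := by
          ring
  -- generators are in I
  have hmem1 : D (h + 1) ∈ I := Ideal.subset_span (by simp)
  have hmem2 : D (h + 2) ∈ I := Ideal.subset_span (by simp)
  -- swapUV (Pi (h+1)) is in I
  have hbase : swapUV (Pi (h + 1)) ∈ I := by
    have hc : (((d - (h + 1) : ℕ) : R2) - ((h + 1 : ℕ) : R2)) = -1 := by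
      have : d - (h + 1) = h := by omega
      rw [this]
      push_cast
      ring
    have := hrec (h + 1)
    rw [hc] at this
    have hsw : swapUV (Pi (h + 1)) = f (h + 1) * D (h + 1) - D (h + 2) := by
      have : D (h + 2) = f (h + 1) * D (h + 1) - swapUV (Pi (h + 1)) := by
        rw [this]; ring
      rw [this]; ring
    rw [hsw]
    exact sub_mem (Ideal.mul_mem_left _ _ hmem1) hmem2
  -- swapUV (Pi j) ∈ I for all j ≥ h + 1
  have hswPi : ∀ j : ℕ, h + 1 ≤ j → swapUV (Pi j) ∈ I := by
    intro j hj
    induction j, hj using Nat.le_induction with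
    | base => exact hbase
    | succ n hn ih =>
        have h1 : Pi (n + 1) = Pi n * f n := by
          simp [hPi, hf, Finset.prod_range_succ]
        rw [h1, swapUV_mul]
        exact Ideal.mul_mem_right _ _ ih
  -- main induction
  intro j hj
  induction j, hj using Nat.le_induction with
  | base => exact hmem1
  | succ n hn ih =>
      rw [hrec n]
      exact add_mem (Ideal.mul_mem_left _ _ ih)
        (Ideal.mul_mem_left _ _ (hswPi n hn))
end
end
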